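/- Let F be a field, k ∈ ℕ, and let M : Σ* → F^{k×k} be a monoid homomorphism, λ ∈ F^k, and V ⊆ F^k a subspace. If there exists a word w with λ·M(w) ∉ V, then there exists such a word of length at most k. -/
import Mathlib


theorem stmt_11 {Sig F : Type*} [Field F] (k : ℕ)
    (M : List Sig → Matrix (Fin k) (Fin k) F)
    (hM1 : M [] = 1) (hMmul : ∀ u v : List Sig, M (u ++ v) = M u * M v)
    (l : Fin k → F) (V : Submodule F (Fin k → F))
    (h : ∃ w : List Sig, Matrix.vecMul l (M w) ∉ V) :
    ∃ w : List Sig, w.length ≤ k ∧ Matrix.vecMul l (M w) ∉ V := by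
  classical
  by_contra hc
  push_neg at hc
  obtain ⟨w0, hw0⟩ := h
  set U : ℕ → Submodule F (Fin k → F) := fun n =>
    Submodule.span F {x | ∃ w : List Sig, w.length ≤ n ∧ x = Matrix.vecMul l (M w)}
    with hU
  have Umono : ∀ {m n : ℕ}, m ≤ n → U m ≤ U n := by
    intro m n hmn
    apply Submodule.span_mono
    rintro x ⟨w, hw, rfl⟩
    exact ⟨w, hw.trans hmn, rfl⟩
  have hmap : ∀ (a : Sig) (n : ℕ),
      Submodule.map (M [a]).vecMulLinear (U n) ≤ U (n + 1) := by
    intro a n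
    rw [hU, Submodule.map_span]
    apply Submodule.span_le.2
    rintro x ⟨y, ⟨w, hw, rfl⟩, rfl⟩
    apply Submodule.subset_span
    refine ⟨w ++ [a], ?_, ?_⟩
    · simp; omega
    · rw [hMmul, Matrix.vecMulLinear_apply, Matrix.vecMul_vecMul]
  have hstep : ∀ n, U n = U (n + 1) → U (n + 1) = U (n + 2) := by
    intro n hn
    refine le_antisymm (Umono (by omega)) ?_
    apply Submodule.span_le.2
    rintro x ⟨w, hw, rfl⟩
    by_cases hlen : w.length ≤ n + 1
    · exact Submodule.subset_span ⟨w, hlen, rfl⟩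
    · have hne : w ≠ [] := by
        intro h; subst h; simp at hlen
      have hdec : w.dropLast ++ [w.getLast hne] = w := List.dropLast_append_getLast hne
      have hdl : w.dropLast.length ≤ n + 1 := by
        have := w.length_dropLast
        omega
      have hmem : Matrix.vecMul l (M w.dropLast) ∈ U n := by
        rw [hn]
        exact Submodule.subset_span ⟨w.dropLast, hdl, rfl⟩
      have := hmap (w.getLast hne) n (Submodule.mem_map_of_mem hmem)
      rwa [Matrix.vecMulLinear_apply, Matrix.vecMul_vecMul, ← hMmul, hdec] at this
  -- find stabilization point
  have hdim : ∀ n, Module.finrank F (U n) ≤ k := by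
    intro n
    have := Submodule.finrank_le (U n)
    rwa [Module.finrank_fin_fun] at this
  have hex : ∃ n ≤ k, U n = U (n + 1) := by
    by_contra hne
    push_neg at hne
    have hlt : ∀ n ≤ k, U n < U (n + 1) := fun n hn =>
      lt_of_le_of_ne (Umono (by omega)) (hne n hn)
    have hrk : ∀ n ≤ k + 1, n ≤ Module.finrank F (U n) := by
      intro n hn
      induction n with
      | zero => omega
      | succ m ih =>
        have h1 := Submodule.finrank_lt_finrank_of_lt (hlt m (by omega))
        have h2 := ih (by omega)
        omega
    have := hrk (k + 1) le_rfl
    have := hdim (k + 1)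
    omega
  obtain ⟨n, hnk, hn⟩ := hex
  have heq : ∀ m, U (n + m) = U (n + m + 1) := by
    intro m
    induction m with
    | zero => exact hn
    | succ p ih => exact hstep (n + p) ih
  have heq2 : ∀ m, U (n + m) = U n := by
    intro m
    induction m with
    | zero => rfl
    | succ p ih => rw [← ih]; exact (heq p).symm
  have hall : ∀ m, U m ≤ U k := by
    intro m
    rcases le_or_gt m k with hm | hm
    · exact Umono hm
    · have : U m = U n := by
        have : m = n + (m - n) := by omega
        rw [this, heq2]
      rw [this]; exact Umono hnk
  have hVk : U k ≤ V := by
    apply Submodule.span_le.2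
    rintro x ⟨w, hw, rfl⟩
    exact hc w hw
  have hx0 : Matrix.vecMul l (M w0) ∈ U w0.length :=
    Submodule.subset_span ⟨w0, le_rfl, rfl⟩
  exact hw0 (hVk (hall w0.length hx0))
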